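/- Let N^C and Ñ^C be the sequences defined by the recursion in (7.1) with N^C_1 = Ñ^C_1 = 1. Then for every d ≥ 1: N^C_d ≡ 1 (mod 4) if d is odd and N^C_d ≡ 0 (mod 4) if d is even; moreover Ñ^C_d ≡ 1 (mod 4) if d is odd or d = 2, Ñ^C_4 ≡ 2 (mod 4), and Ñ^C_d ≡ 0 (mod 4) if d is even and d ∉ {2,4}. -/

import Mathlib

def binS (n r : ℕ) : ℕ := ∑ k ∈ Finset.range (n+1), if k % 4 = r then n.choose k else 0
def binT (n r : ℕ) : ℕ := ∑ k ∈ Finset.range (n+1), if k % 4 = r then (k/2+1) * n.choose k else 0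

lemma binS_succ (n r : ℕ) (hr : r < 4) :
    binS (n+1) r = binS n r + binS n ((r+3) % 4) := by
  have h1 : ∀ k, (if (k+1) % 4 = r then (n+1).choose (k+1) else 0)
      = (if k % 4 = (r+3) % 4 then n.choose k else 0)
        + (if (k+1) % 4 = r then n.choose (k+1) else 0) := by
    intro k
    have hiff : (k+1) % 4 = r ↔ k % 4 = (r+3) % 4 := by omega
    rw [Nat.choose_succ_succ]
    by_cases h : (k+1) % 4 = r
    · rw [if_pos h, if_pos (hiff.mp h), if_pos h]
    · rw [if_neg h, if_neg (fun hh => h (hiff.mpr hh)), if_neg h]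
  have e1 : binS (n+1) r
      = (∑ k ∈ Finset.range (n+1), if (k+1) % 4 = r then (n+1).choose (k+1) else 0)
        + (if 0 % 4 = r then (n+1).choose 0 else 0) := by
    rw [binS, Finset.sum_range_succ']
  rw [e1]
  simp only [h1]
  rw [Finset.sum_add_distrib]
  have e2 : (∑ k ∈ Finset.range (n+1), if (k+1) % 4 = r then n.choose (k+1) else 0)
      + (if 0 % 4 = r then (n+1).choose 0 else 0)
      = ∑ k ∈ Finset.range (n+2), if k % 4 = r then n.choose k else 0 := by
    rw [Finset.sum_range_succ' (fun k => if k % 4 = r then n.choose k else 0) (n+1)]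
    simp
  have e3 : (∑ k ∈ Finset.range (n+2), if k % 4 = r then n.choose k else 0) = binS n r := by
    rw [Finset.sum_range_succ]
    have : n.choose (n+1) = 0 := Nat.choose_eq_zero_of_lt (by omega)
    simp [binS, this]
  rw [add_assoc, e2, e3, add_comm]
  rfl

lemma binT_succ (n r : ℕ) (hr : r < 4) :
    binT (n+1) r = binT n r + binT n ((r+3) % 4)
      + (if (r+3) % 4 % 2 = 1 then binS n ((r+3) % 4) else 0) := by
  have h1 : ∀ k, (if (k+1) % 4 = r then ((k+1)/2+1) * (n+1).choose (k+1) else 0)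
      = ((if k % 4 = (r+3) % 4 then (k/2+1) * n.choose k else 0)
          + (if k % 4 = (r+3) % 4 then (k%2) * n.choose k else 0))
        + (if (k+1) % 4 = r then ((k+1)/2+1) * n.choose (k+1) else 0) := by
    intro k
    have hiff : (k+1) % 4 = r ↔ k % 4 = (r+3) % 4 := by omega
    rw [Nat.choose_succ_succ]
    by_cases h : (k+1) % 4 = r
    · rw [if_pos h, if_pos (hiff.mp h), if_pos (hiff.mp h), if_pos h]
      have hw : (k+1)/2 + 1 = (k/2 + 1) + k % 2 := by omega
      rw [hw]; ring
    · rw [if_neg h, if_neg (fun hh => h (hiff.mpr hh)), if_neg (fun hh => h (hiff.mpr hh)), if_neg h]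
  have e1 : binT (n+1) r
      = (∑ k ∈ Finset.range (n+1), if (k+1) % 4 = r then ((k+1)/2+1) * (n+1).choose (k+1) else 0)
        + (if 0 % 4 = r then (0/2+1) * (n+1).choose 0 else 0) := by
    rw [binT, Finset.sum_range_succ']
  rw [e1]
  simp only [h1]
  rw [Finset.sum_add_distrib, Finset.sum_add_distrib]
  have e2 : (∑ k ∈ Finset.range (n+1), if (k+1) % 4 = r then ((k+1)/2+1) * n.choose (k+1) else 0)
      + (if 0 % 4 = r then (0/2+1) * (n+1).choose 0 else 0)
      = ∑ k ∈ Finset.range (n+2), if k % 4 = r then (k/2+1) * n.choose k else 0 := by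
    rw [Finset.sum_range_succ' (fun k => if k % 4 = r then (k/2+1) * n.choose k else 0) (n+1)]
    simp
  have e3 : (∑ k ∈ Finset.range (n+2), if k % 4 = r then (k/2+1) * n.choose k else 0) = binT n r := by
    rw [Finset.sum_range_succ]
    have : n.choose (n+1) = 0 := Nat.choose_eq_zero_of_lt (by omega)
    simp [binT, this]
  have e4 : (∑ k ∈ Finset.range (n+1), if k % 4 = (r+3) % 4 then (k%2) * n.choose k else 0)
      = (if (r+3) % 4 % 2 = 1 then binS n ((r+3) % 4) else 0) := by
    by_cases hp : (r+3) % 4 % 2 = 1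
    · rw [if_pos hp, binS]
      refine Finset.sum_congr rfl fun k _ => ?_
      by_cases h : k % 4 = (r+3) % 4
      · rw [if_pos h, if_pos h, (by omega : k % 2 = 1), one_mul]
      · rw [if_neg h, if_neg h]
    · rw [if_neg hp]
      refine Finset.sum_eq_zero fun k _ => ?_
      by_cases h : k % 4 = (r+3) % 4
      · rw [if_pos h, (by omega : k % 2 = 0), zero_mul]
      · rw [if_neg h]
  rw [add_assoc, add_assoc, e2, e3, e4]
  have hA : (∑ k ∈ Finset.range (n+1), if k % 4 = (r+3) % 4 then (k/2+1) * n.choose k else 0)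
      = binT n ((r+3) % 4) := rfl
  rw [hA]
  ring

lemma binS_mod8 (n r : ℕ) (h8 : 8 ≤ n) (hr : r < 4) : binS n r % 8 = 0 := by
  obtain ⟨j, rfl⟩ := Nat.exists_eq_add_of_le h8
  clear h8
  induction j generalizing r with
  | zero => interval_cases r <;> decide +kernel
  | succ j ih =>
    rw [show 8 + (j+1) = (8+j) + 1 by omega, binS_succ _ _ hr]
    have h1 := ih r hr
    have h2 := ih ((r+3) % 4) (by omega)
    omega

lemma binT_mod4 (n r : ℕ) (h8 : 8 ≤ n) (hr : r < 4) : binT n r % 4 = 0 := by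
  obtain ⟨j, rfl⟩ := Nat.exists_eq_add_of_le h8
  clear h8
  induction j generalizing r with
  | zero => interval_cases r <;> decide +kernel
  | succ j ih =>
    rw [show 8 + (j+1) = (8+j) + 1 by omega, binT_succ _ _ hr]
    have h1 := ih r hr
    have h2 := ih ((r+3) % 4) (by omega)
    have h3 := binS_mod8 (8+j) ((r+3) % 4) (by omega) (by omega)
    by_cases hp : (r+3) % 4 % 2 = 1
    · rw [if_pos hp]; omega
    · rw [if_neg hp]; omega
lemma reindex0 (d n : ℕ) (f : ℕ → ℕ) (hd : 2 ≤ d) (hn1 : 2*d - 4 ≤ n)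
    (hn2 : ∀ k, k % 4 = 0 → k < n + 1 → k ≤ 2*d - 4) :
    (∑ d1 ∈ Finset.Ioo 0 d, if Odd d1 then f (2*d1-2) else 0)
      = ∑ k ∈ Finset.range (n+1), if k % 4 = 0 then f k else 0 := by
  rw [← Finset.sum_filter, ← Finset.sum_filter]
  refine Finset.sum_nbij' (fun d1 => 2*d1 - 2) (fun k => k/2 + 1) ?_ ?_ ?_ ?_ ?_
  · intro a ha
    simp only [Finset.mem_filter, Finset.mem_Ioo, Nat.odd_iff] at ha
    simp only [Finset.mem_filter, Finset.mem_range]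
    have := hn2
    omega
  · intro k hk
    simp only [Finset.mem_filter, Finset.mem_range] at hk
    simp only [Finset.mem_filter, Finset.mem_Ioo, Nat.odd_iff]
    have := hn2 k hk.2 hk.1
    omega
  · intro a ha
    simp only [Finset.mem_filter, Finset.mem_Ioo, Nat.odd_iff] at ha
    show (2*a-2)/2 + 1 = a
    omega
  · intro k hk
    simp only [Finset.mem_filter, Finset.mem_range] at hk
    show 2*(k/2+1) - 2 = k
    omega
  · intro a ha
    rfl

lemma reindex1 (d n : ℕ) (f : ℕ → ℕ) (hd : 2 ≤ d) (hn1 : 2*d - 3 ≤ n)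
    (hn2 : ∀ k, k % 4 = 1 → k < n + 1 → k ≤ 2*d - 3) :
    (∑ d1 ∈ Finset.Ioo 0 d, if Odd d1 then f (2*d1-1) else 0)
      = ∑ k ∈ Finset.range (n+1), if k % 4 = 1 then f k else 0 := by
  rw [← Finset.sum_filter, ← Finset.sum_filter]
  refine Finset.sum_nbij' (fun d1 => 2*d1 - 1) (fun k => k/2 + 1) ?_ ?_ ?_ ?_ ?_
  · intro a ha
    simp only [Finset.mem_filter, Finset.mem_Ioo, Nat.odd_iff] at ha
    simp only [Finset.mem_filter, Finset.mem_range]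
    omega
  · intro k hk
    simp only [Finset.mem_filter, Finset.mem_range] at hk
    simp only [Finset.mem_filter, Finset.mem_Ioo, Nat.odd_iff]
    have := hn2 k hk.2 hk.1
    omega
  · intro a ha
    simp only [Finset.mem_filter, Finset.mem_Ioo, Nat.odd_iff] at ha
    show (2*a-1)/2 + 1 = a
    omega
  · intro k hk
    simp only [Finset.mem_filter, Finset.mem_range] at hk
    show 2*(k/2+1) - 1 = k
    omega
  · intro a ha
    rfl

lemma choose2_eq (n : ℕ) : 2 * n.choose 2 = n * (n-1) := by
  have h := Nat.descFactorial_eq_factorial_mul_choose n 2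
  rw [show Nat.factorial 2 = 2 from rfl] at h
  rw [← h]
  simp [Nat.descFactorial_succ, Nat.descFactorial_zero]
  ring

lemma choose3_eq (n : ℕ) : 6 * n.choose 3 = n * (n-1) * (n-2) := by
  have h := Nat.descFactorial_eq_factorial_mul_choose n 3
  rw [show Nat.factorial 3 = 6 from rfl] at h
  rw [← h]
  simp [Nat.descFactorial_succ, Nat.descFactorial_zero]
  ring

lemma choose6_eq (n : ℕ) :
    720 * n.choose 6 = n * (n-1) * (n-2) * (n-3) * (n-4) * (n-5) := by
  have h := Nat.descFactorial_eq_factorial_mul_choose n 6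
  rw [show Nat.factorial 6 = 720 from rfl] at h
  rw [← h]
  simp [Nat.descFactorial_succ, Nat.descFactorial_zero]
  ring

lemma B2 (a : ℕ) : (4*a+7).choose 2 = (4*a+7) * (2*a+3) := by
  have h := choose2_eq (4*a+7)
  rw [show 4*a+7-1 = 4*a+6 by omega] at h
  have h2 : (4*a+7) * (4*a+6) = 2 * ((4*a+7) * (2*a+3)) := by ring
  omega

lemma B2' (a : ℕ) : (4*a+8).choose 2 = (2*a+4) * (4*a+7) := by
  have h := choose2_eq (4*a+8)
  rw [show 4*a+8-1 = 4*a+7 by omega] at h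
  have h2 : (4*a+8) * (4*a+7) = 2 * ((2*a+4) * (4*a+7)) := by ring
  omega

lemma B3 (a : ℕ) : ((4*a+7).choose 3) % 2 = 1 := by
  have h := choose3_eq (4*a+7)
  rw [show 4*a+7-1 = 4*a+6 by omega, show 4*a+7-2 = 4*a+5 by omega] at h
  have o1 : Odd (4*a+7) := Nat.odd_iff.mpr (by omega)
  have o2 : Odd (2*a+3) := Nat.odd_iff.mpr (by omega)
  have o3 : Odd (4*a+5) := Nat.odd_iff.mpr (by omega)
  obtain ⟨Y, hY1, hY2⟩ : ∃ Y, 6 * ((4*a+7).choose 3) = 2 * Y ∧ Y % 2 = 1 :=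
    ⟨(4*a+7) * ((2*a+3) * (4*a+5)), by rw [h]; ring, Nat.odd_iff.mp (o1.mul (o2.mul o3))⟩
  omega

lemma B3' (a : ℕ) : ((4*a+8).choose 3) % 2 = 0 := by
  have h := choose3_eq (4*a+8)
  rw [show 4*a+8-1 = 4*a+7 by omega, show 4*a+8-2 = 4*a+6 by omega] at h
  obtain ⟨Y, hY1⟩ : ∃ Y, 6 * ((4*a+8).choose 3) = 8 * Y :=
    ⟨(a+2) * (4*a+7) * (2*a+3), by rw [h]; ring⟩
  omega

lemma B6 (a : ℕ) : ((4*a+7).choose 6) % 2 = (a+1) % 2 := by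
  rcases Nat.even_or_odd a with he | ho
  · obtain ⟨g, rfl⟩ := he
    rw [show 4*(g+g)+7 = 8*g+7 by omega]
    have h := choose6_eq (8*g+7)
    rw [show 8*g+7-1 = 8*g+6 by omega, show 8*g+7-2 = 8*g+5 by omega,
        show 8*g+7-3 = 8*g+4 by omega, show 8*g+7-4 = 8*g+3 by omega,
        show 8*g+7-5 = 8*g+2 by omega] at h
    have o1 : Odd (8*g+7) := Nat.odd_iff.mpr (by omega)
    have o2 : Odd (4*g+3) := Nat.odd_iff.mpr (by omega)
    have o3 : Odd (8*g+5) := Nat.odd_iff.mpr (by omega)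
    have o4 : Odd (2*g+1) := Nat.odd_iff.mpr (by omega)
    have o5 : Odd (8*g+3) := Nat.odd_iff.mpr (by omega)
    have o6 : Odd (4*g+1) := Nat.odd_iff.mpr (by omega)
    obtain ⟨Y, hY1, hY2⟩ : ∃ Y, 720 * ((8*g+7).choose 6) = 16 * Y ∧ Y % 2 = 1 :=
      ⟨(8*g+7) * ((4*g+3) * ((8*g+5) * ((2*g+1) * ((8*g+3) * (4*g+1))))),
        by rw [h]; ring, Nat.odd_iff.mp (o1.mul (o2.mul (o3.mul (o4.mul (o5.mul o6)))))⟩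
    omega
  · obtain ⟨g, rfl⟩ := ho
    rw [show 4*(2*g+1)+7 = 8*g+11 by omega]
    have h := choose6_eq (8*g+11)
    rw [show 8*g+11-1 = 8*g+10 by omega, show 8*g+11-2 = 8*g+9 by omega,
        show 8*g+11-3 = 8*g+8 by omega, show 8*g+11-4 = 8*g+7 by omega,
        show 8*g+11-5 = 8*g+6 by omega] at h
    obtain ⟨Y, hY1⟩ : ∃ Y, 720 * ((8*g+11).choose 6) = 32 * Y :=
      ⟨(8*g+11) * (4*g+5) * (8*g+9) * (g+1) * (8*g+7) * (4*g+3), by rw [h]; ring⟩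
    omega

lemma B6' (a : ℕ) : ((4*a+8).choose 6) % 2 = 0 := by
  have h := choose6_eq (4*a+8)
  rw [show 4*a+8-1 = 4*a+7 by omega, show 4*a+8-2 = 4*a+6 by omega,
      show 4*a+8-3 = 4*a+5 by omega, show 4*a+8-4 = 4*a+4 by omega,
      show 4*a+8-5 = 4*a+3 by omega] at h
  obtain ⟨Y, hY1⟩ : ∃ Y, 720 * ((4*a+8).choose 6) = 32 * Y :=
    ⟨(a+2) * (4*a+7) * (2*a+3) * (4*a+5) * (a+1) * (4*a+3), by rw [h]; ring⟩
  omega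

lemma sum_two_ite (n : ℕ) (hn : 5 ≤ n) (V2 V4 : ZMod 4) :
    ∑ x ∈ Finset.Ioo 0 n, (if x = 2 then V2 else if x = 4 then V4 else 0) = V2 + V4 := by
  have h : ∀ x ∈ Finset.Ioo 0 n, (if x = 2 then V2 else if x = 4 then V4 else 0)
      = (if x = 2 then V2 else 0) + (if x = 4 then V4 else 0) := by
    intro x _
    by_cases h2 : x = 2
    · subst h2; simp
    · by_cases h4 : x = 4 <;> simp [h2, h4]
  rw [Finset.sum_congr rfl h, Finset.sum_add_distrib, Finset.sum_ite_eq', Finset.sum_ite_eq',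
    if_pos (by simp only [Finset.mem_Ioo]; omega : (2:ℕ) ∈ Finset.Ioo 0 n),
    if_pos (by simp only [Finset.mem_Ioo]; omega : (4:ℕ) ∈ Finset.Ioo 0 n)]

/-- Mod-4 behaviour of the complex genus-0 GW-invariants of `P³` defined by the
Ruan–Tian recursions (7.1) with `N_1 = Nt_1 = 1`: for every `d ≥ 1`,
`N_d ≡ 1 (mod 4)` if `d` is odd and `N_d ≡ 0 (mod 4)` if `d` is even; moreover
`Nt_d ≡ 1 (mod 4)` if `d` is odd or `d = 2`, `Nt_4 ≡ 2 (mod 4)`, and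
`Nt_d ≡ 0 (mod 4)` for even `d ∉ {2, 4}`. -/
theorem stmt_5 (N Nt : ℕ → ℤ)
    (hN1 : N 1 = 1) (hNt1 : Nt 1 = 1)
    (hN : ∀ d, 2 ≤ d →
      N d = ∑ d1 ∈ Finset.Ioo 0 d,
        (((d - d1 : ℕ) : ℤ) ^ 2 * (Nat.choose (2 * d - 3) (2 * d1 - 2) : ℤ)
            - (d1 : ℤ) * ((d - d1 : ℕ) : ℤ) * (Nat.choose (2 * d - 3) (2 * d1 - 1) : ℤ))
          * Nt d1 * N (d - d1))
    (hNt : ∀ d, 2 ≤ d →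
      Nt d = (d : ℤ) * N d + ∑ d1 ∈ Finset.Ioo 0 d,
        ((d1 : ℤ) * ((d - d1 : ℕ) : ℤ) ^ 2 * (Nat.choose (2 * d - 2) (2 * d1 - 1) : ℤ)
            - ((d - d1 : ℕ) : ℤ) ^ 3 * (Nat.choose (2 * d - 2) (2 * d1 - 2) : ℤ))
          * Nt d1 * N (d - d1)) :
    ∀ d, 1 ≤ d →
      (Odd d → N d % 4 = 1) ∧
      (Even d → N d % 4 = 0) ∧
      ((Odd d ∨ d = 2) → Nt d % 4 = 1) ∧
      (d = 4 → Nt d % 4 = 2) ∧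
      ((Even d ∧ d ≠ 2 ∧ d ≠ 4) → Nt d % 4 = 0) := by
  have hN2 : N 2 = 0 := by
    rw [hN 2 (by norm_num), show Finset.Ioo 0 2 = {1} from rfl, Finset.sum_singleton,
      show (2:ℕ)-1 = 1 from rfl, hN1, hNt1]
    decide
  have hNt2 : Nt 2 = 1 := by
    rw [hNt 2 (by norm_num), show Finset.Ioo 0 2 = {1} from rfl, Finset.sum_singleton,
      show (2:ℕ)-1 = 1 from rfl, hN1, hNt1, hN2]
    decide
  have hN3 : N 3 = 1 := by
    rw [hN 3 (by norm_num), show Finset.Ioo 0 3 = {1, 2} from rfl,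
      Finset.sum_insert (by decide), Finset.sum_singleton,
      show (3:ℕ)-1 = 2 from rfl, show (3:ℕ)-2 = 1 from rfl, hN1, hNt1, hN2, hNt2]
    decide
  have hNt3 : Nt 3 = 5 := by
    rw [hNt 3 (by norm_num), show Finset.Ioo 0 3 = {1, 2} from rfl,
      Finset.sum_insert (by decide), Finset.sum_singleton,
      show (3:ℕ)-1 = 2 from rfl, show (3:ℕ)-2 = 1 from rfl, hN1, hNt1, hN2, hNt2, hN3]
    decide
  have hN4 : N 4 = 4 := by
    rw [hN 4 (by norm_num), show Finset.Ioo 0 4 = {1, 2, 3} from rfl,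
      Finset.sum_insert (by decide), Finset.sum_insert (by decide), Finset.sum_singleton,
      show (4:ℕ)-1 = 3 from rfl, show (4:ℕ)-2 = 2 from rfl, show (4:ℕ)-3 = 1 from rfl,
      hN1, hNt1, hN2, hNt2, hN3, hNt3]
    decide
  have hNt4 : Nt 4 = 58 := by
    rw [hNt 4 (by norm_num), show Finset.Ioo 0 4 = {1, 2, 3} from rfl,
      Finset.sum_insert (by decide), Finset.sum_insert (by decide), Finset.sum_singleton,
      show (4:ℕ)-1 = 3 from rfl, show (4:ℕ)-2 = 2 from rfl, show (4:ℕ)-3 = 1 from rfl,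
      hN1, hNt1, hN2, hNt2, hN3, hNt3, hN4]
    decide
  have key : ∀ d, 1 ≤ d →
      ((N d : ZMod 4) = if d % 2 = 1 then 1 else 0) ∧
      ((Nt d : ZMod 4) = if d % 2 = 1 then 1 else if d = 2 then 1 else if d = 4 then 2 else 0) := by
    intro d
    induction d using Nat.strong_induction_on with
    | _ d ih =>
    intro hd1
    have ihN1 : ∀ m, 0 < m → m < d → m % 2 = 1 → ((N m : ℤ) : ZMod 4) = 1 := by
      intro m h1 h2 h3
      have := (ih m h2 h1).1
      rwa [if_pos h3] at this
    have ihN0 : ∀ m, 0 < m → m < d → m % 2 = 0 → ((N m : ℤ) : ZMod 4) = 0 := by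
      intro m h1 h2 h3
      have := (ih m h2 h1).1
      rwa [if_neg (by omega)] at this
    have ihNt1 : ∀ m, 0 < m → m < d → m % 2 = 1 → ((Nt m : ℤ) : ZMod 4) = 1 := by
      intro m h1 h2 h3
      have := (ih m h2 h1).2
      rwa [if_pos h3] at this
    have ihNt0 : ∀ m, 0 < m → m < d → m % 2 = 0 → m ≠ 2 → m ≠ 4 → ((Nt m : ℤ) : ZMod 4) = 0 := by
      intro m h1 h2 h3 h4 h5
      have := (ih m h2 h1).2
      rwa [if_neg (by omega), if_neg h4, if_neg h5] at this
    have ihNt2 : 2 < d → ((Nt 2 : ℤ) : ZMod 4) = 1 := by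
      intro h
      rw [hNt2]; decide
    have ihNt4 : 4 < d → ((Nt 4 : ℤ) : ZMod 4) = 2 := by
      intro h
      rw [hNt4]; decide
    rcases lt_or_ge d 5 with hd5 | hd5
    · interval_cases d
      · exact ⟨by rw [hN1]; decide, by rw [hNt1]; decide⟩
      · exact ⟨by rw [hN2]; decide, by rw [hNt2]; decide⟩
      · exact ⟨by rw [hN3]; decide, by rw [hNt3]; decide⟩
      · exact ⟨by rw [hN4]; decide, by rw [hNt4]; decide⟩
    · by_cases hpar : d % 2 = 1
      · -- odd case, d ≥ 5
        obtain ⟨e, rfl⟩ : ∃ e, d = 2*e+5 := ⟨(d-5)/2, by omega⟩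
        have hcN : ((N (2*e+5) : ℤ) : ZMod 4) = ∑ x ∈ Finset.Ioo 0 (2*e+5),
            (((((2*e+5 - x : ℕ) : ℤ) ^ 2 * (Nat.choose (2 * (2*e+5) - 3) (2 * x - 2) : ℤ)
              - (x : ℤ) * ((2*e+5 - x : ℕ) : ℤ) * (Nat.choose (2 * (2*e+5) - 3) (2 * x - 1) : ℤ))
              * Nt x * N (2*e+5 - x) : ℤ) : ZMod 4) := by
          rw [hN (2*e+5) (by omega)]
          push_cast
          rfl
        have hNres : ((N (2*e+5) : ℤ) : ZMod 4) = 1 := by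
          rw [hcN]
          refine Eq.trans (Finset.sum_congr rfl
            (g := fun x => if x = 2 then 2*(e:ZMod 4)+3 else if x = 4 then 2*(e:ZMod 4)+2 else 0)
            (fun x hx => ?_))
            ((sum_two_ite (2*e+5) (by omega) _ _).trans
              ((by decide : ∀ y : ZMod 4, 2*y+3 + (2*y+2) = 1) (e : ZMod 4)))
          simp only [Finset.mem_Ioo] at hx
          show _ = if x = 2 then _ else if x = 4 then _ else _
          by_cases hx2 : x = 2
          · subst hx2
            rw [if_pos rfl, show 2*(2*e+5)-3 = 4*e+7 by omega, show 2*e+5-2 = 2*e+3 by omega,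
              show 2*2-2 = 2 from rfl, show 2*2-1 = 3 from rfl]
            obtain ⟨c3, hc3⟩ : ∃ c, (4*e+7).choose 3 = 2*c+1 :=
              ⟨((4*e+7).choose 3)/2, by have := B3 e; omega⟩
            push_cast
            rw [ihNt2 (by omega), ihN1 (2*e+3) (by omega) (by omega) (by omega), B2 e, hc3]
            push_cast
            generalize (e : ZMod 4) = E
            generalize (c3 : ZMod 4) = C
            revert E C
            decide
          · by_cases hx4 : x = 4
            · subst hx4
              rw [if_neg hx2, if_pos rfl, show 2*(2*e+5)-3 = 4*e+7 by omega,
                show 2*e+5-4 = 2*e+1 by omega, show 2*4-2 = 6 from rfl, show 2*4-1 = 7 from rfl]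
              push_cast
              rw [ihNt4 (by omega), ihN1 (2*e+1) (by omega) (by omega) (by omega)]
              rcases Nat.even_or_odd e with ⟨g, rfl⟩ | ⟨g, rfl⟩
              · obtain ⟨c6, hc6⟩ : ∃ c, (4*(g+g)+7).choose 6 = 2*c+1 :=
                  ⟨((4*(g+g)+7).choose 6)/2, by have := B6 (g+g); omega⟩
                rw [hc6]
                push_cast
                generalize ((4*(g+g)+7).choose 7 : ZMod 4) = C7
                generalize (g : ZMod 4) = G
                generalize (c6 : ZMod 4) = C
                revert C7 G C
                decide
              · obtain ⟨c6, hc6⟩ : ∃ c, (4*(2*g+1)+7).choose 6 = 2*c :=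
                  ⟨((4*(2*g+1)+7).choose 6)/2, by have := B6 (2*g+1); omega⟩
                rw [hc6]
                push_cast
                generalize ((4*(2*g+1)+7).choose 7 : ZMod 4) = C7
                generalize (g : ZMod 4) = G
                generalize (c6 : ZMod 4) = C
                revert C7 G C
                decide
            · rw [if_neg hx2, if_neg hx4]
              push_cast
              by_cases hox : x % 2 = 1
              · rw [ihN0 (2*e+5-x) (by omega) (by omega) (by omega), mul_zero]
              · rw [ihNt0 x (by omega) (by omega) (by omega) hx2 hx4, mul_zero, zero_mul]
        have hcNt : ((Nt (2*e+5) : ℤ) : ZMod 4) = (((2*e+5 : ℕ) : ℤ) : ZMod 4) * ((N (2*e+5) : ℤ) : ZMod 4)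
            + ∑ x ∈ Finset.Ioo 0 (2*e+5),
            ((((x : ℤ) * ((2*e+5 - x : ℕ) : ℤ) ^ 2 * (Nat.choose (2 * (2*e+5) - 2) (2 * x - 1) : ℤ)
              - ((2*e+5 - x : ℕ) : ℤ) ^ 3 * (Nat.choose (2 * (2*e+5) - 2) (2 * x - 2) : ℤ))
              * Nt x * N (2*e+5 - x) : ℤ) : ZMod 4) := by
          rw [hNt (2*e+5) (by omega)]
          push_cast
          rfl
        have hNtres : ((Nt (2*e+5) : ℤ) : ZMod 4) = 1 := by
          rw [hcNt, hNres, mul_one]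
          refine Eq.trans (congrArg _ (Finset.sum_congr rfl
            (g := fun x => if x = 2 then 2*(e:ZMod 4) else if x = 4 then 0 else 0)
            (fun x hx => ?_)))
            (Eq.trans (congrArg _ (sum_two_ite (2*e+5) (by omega) _ _))
              (by push_cast
                  exact (by decide : ∀ y : ZMod 4, 2*y+5 + (2*y+0) = 1) (e : ZMod 4)))
          simp only [Finset.mem_Ioo] at hx
          show _ = if x = 2 then _ else if x = 4 then _ else _
          by_cases hx2 : x = 2
          · subst hx2
            rw [if_pos rfl, show 2*(2*e+5)-2 = 4*e+8 by omega, show 2*e+5-2 = 2*e+3 by omega,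
              show 2*2-2 = 2 from rfl, show 2*2-1 = 3 from rfl]
            obtain ⟨c3, hc3⟩ : ∃ c, (4*e+8).choose 3 = 2*c :=
              ⟨((4*e+8).choose 3)/2, by have := B3' e; omega⟩
            push_cast
            rw [ihNt2 (by omega), ihN1 (2*e+3) (by omega) (by omega) (by omega), B2' e, hc3]
            push_cast
            generalize (e : ZMod 4) = E
            generalize (c3 : ZMod 4) = C
            revert E C
            decide
          · by_cases hx4 : x = 4
            · subst hx4
              rw [if_neg hx2, if_pos rfl, show 2*(2*e+5)-2 = 4*e+8 by omega,
                show 2*e+5-4 = 2*e+1 by omega, show 2*4-2 = 6 from rfl, show 2*4-1 = 7 from rfl]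
              obtain ⟨c6, hc6⟩ : ∃ c, (4*e+8).choose 6 = 2*c :=
                ⟨((4*e+8).choose 6)/2, by have := B6' e; omega⟩
              push_cast
              rw [ihNt4 (by omega), ihN1 (2*e+1) (by omega) (by omega) (by omega), hc6]
              push_cast
              generalize ((4*e+8).choose 7 : ZMod 4) = C7
              generalize (e : ZMod 4) = E
              generalize (c6 : ZMod 4) = C
              revert C7 E C
              decide
            · rw [if_neg hx2, if_neg hx4]
              push_cast
              by_cases hox : x % 2 = 1
              · rw [ihN0 (2*e+5-x) (by omega) (by omega) (by omega), mul_zero]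
              · rw [ihNt0 x (by omega) (by omega) (by omega) hx2 hx4, mul_zero, zero_mul]
        exact ⟨by rw [if_pos (by omega)]; exact hNres, by rw [if_pos (by omega)]; exact hNtres⟩
      · -- even case, d ≥ 6
        obtain ⟨e, rfl⟩ : ∃ e, d = 2*e+6 := ⟨(d-6)/2, by omega⟩
        have hcN : ((N (2*e+6) : ℤ) : ZMod 4) = ∑ x ∈ Finset.Ioo 0 (2*e+6),
            (((((2*e+6 - x : ℕ) : ℤ) ^ 2 * (Nat.choose (2 * (2*e+6) - 3) (2 * x - 2) : ℤ)
              - (x : ℤ) * ((2*e+6 - x : ℕ) : ℤ) * (Nat.choose (2 * (2*e+6) - 3) (2 * x - 1) : ℤ))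
              * Nt x * N (2*e+6 - x) : ℤ) : ZMod 4) := by
          rw [hN (2*e+6) (by omega)]
          push_cast
          rfl
        have hterm : ∀ x ∈ Finset.Ioo 0 (2*e+6),
            (((((2*e+6 - x : ℕ) : ℤ) ^ 2 * (Nat.choose (2 * (2*e+6) - 3) (2 * x - 2) : ℤ)
              - (x : ℤ) * ((2*e+6 - x : ℕ) : ℤ) * (Nat.choose (2 * (2*e+6) - 3) (2 * x - 1) : ℤ))
              * Nt x * N (2*e+6 - x) : ℤ) : ZMod 4)
            = (if Odd x then (((4*e+9).choose (2*x-2) : ℕ) : ZMod 4)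
                - (2*(e:ZMod 4)+1) * (((4*e+9).choose (2*x-1) : ℕ) : ZMod 4) else 0) := by
          intro x hx
          simp only [Finset.mem_Ioo] at hx
          rw [show 2*(2*e+6)-3 = 4*e+9 by omega]
          by_cases hox : x % 2 = 1
          · rw [if_pos (Nat.odd_iff.mpr hox)]
            obtain ⟨c, rfl⟩ : ∃ c, x = 2*c+1 := ⟨(x-1)/2, by omega⟩
            obtain ⟨u, hu1, hu2⟩ : ∃ u, 2*e+6-(2*c+1) = 2*u+1 ∧ c+u = e+2 :=
              ⟨e+2-c, by omega, by omega⟩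
            rw [hu1]
            push_cast
            rw [ihNt1 (2*c+1) (by omega) (by omega) (by omega),
              ihN1 (2*u+1) (by omega) (by omega) (by omega)]
            have he : ((e:ℕ) : ZMod 4) = (c : ZMod 4) + (u : ZMod 4) - 2 := by
              have h3 := congrArg (fun t : ℕ => (t : ZMod 4)) hu2
              push_cast at h3
              linear_combination -h3
            rw [he]
            generalize (((4*e+9).choose (2*(2*c+1)-2) : ℕ) : ZMod 4) = A
            generalize (((4*e+9).choose (2*(2*c+1)-1) : ℕ) : ZMod 4) = B
            generalize (c : ZMod 4) = C
            generalize (u : ZMod 4) = U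
            revert A B C U
            decide
          · rw [if_neg (by rw [Nat.odd_iff]; omega)]
            push_cast
            rw [ihN0 (2*e+6-x) (by omega) (by omega) (by omega), mul_zero]
        have hNres : ((N (2*e+6) : ℤ) : ZMod 4) = 0 := by
          rw [hcN, Finset.sum_congr rfl hterm]
          have h2n : (∑ x ∈ Finset.Ioo 0 (2*e+6), if Odd x then (4*e+9).choose (2*x-2) else 0)
              = binS (4*e+9) 0 := by
            have hnat := reindex0 (2*e+6) (4*e+9) (fun k => (4*e+9).choose k)
              (by omega) (by omega) (fun k hk1 hk2 => by omega)
            exact hnat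
          have h3n : (∑ x ∈ Finset.Ioo 0 (2*e+6), if Odd x then (4*e+9).choose (2*x-1) else 0)
              = binS (4*e+9) 1 := by
            have hnat := reindex1 (2*e+6) (4*e+9) (fun k => (4*e+9).choose k)
              (by omega) (by omega) (fun k hk1 hk2 => by omega)
            exact hnat
          have c0 : (∑ x ∈ Finset.Ioo 0 (2*e+6),
              if Odd x then (((4*e+9).choose (2*x-2) : ℕ) : ZMod 4) else 0) = 0 := by
            have hz : ((∑ x ∈ Finset.Ioo 0 (2*e+6),
                if Odd x then (4*e+9).choose (2*x-2) else 0 : ℕ) : ZMod 4) = 0 := by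
              rw [h2n]
              exact (ZMod.natCast_eq_zero_iff _ 4).mpr
                (by have := binS_mod8 (4*e+9) 0 (by omega) (by omega); omega)
            rw [Nat.cast_sum] at hz
            refine Eq.trans (Finset.sum_congr rfl fun x _ => ?_) hz
            by_cases h : Odd x <;> simp [h]
          have c1 : (∑ x ∈ Finset.Ioo 0 (2*e+6),
              if Odd x then (((4*e+9).choose (2*x-1) : ℕ) : ZMod 4) else 0) = 0 := by
            have hz : ((∑ x ∈ Finset.Ioo 0 (2*e+6),
                if Odd x then (4*e+9).choose (2*x-1) else 0 : ℕ) : ZMod 4) = 0 := by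
              rw [h3n]
              exact (ZMod.natCast_eq_zero_iff _ 4).mpr
                (by have := binS_mod8 (4*e+9) 1 (by omega) (by omega); omega)
            rw [Nat.cast_sum] at hz
            refine Eq.trans (Finset.sum_congr rfl fun x _ => ?_) hz
            by_cases h : Odd x <;> simp [h]
          have hsplit : (∑ x ∈ Finset.Ioo 0 (2*e+6),
              if Odd x then (((4*e+9).choose (2*x-2) : ℕ) : ZMod 4)
                - (2*(e:ZMod 4)+1) * (((4*e+9).choose (2*x-1) : ℕ) : ZMod 4) else 0)
              = (∑ x ∈ Finset.Ioo 0 (2*e+6),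
                  if Odd x then (((4*e+9).choose (2*x-2) : ℕ) : ZMod 4) else 0)
                - (2*(e:ZMod 4)+1) * (∑ x ∈ Finset.Ioo 0 (2*e+6),
                  if Odd x then (((4*e+9).choose (2*x-1) : ℕ) : ZMod 4) else 0) := by
            rw [Finset.mul_sum, ← Finset.sum_sub_distrib]
            refine Finset.sum_congr rfl fun x _ => ?_
            by_cases h : Odd x <;> simp [h]
          rw [hsplit, c0, c1]
          ring
        have hcNt : ((Nt (2*e+6) : ℤ) : ZMod 4) = (((2*e+6:ℕ):ℤ) : ZMod 4) * ((N (2*e+6) : ℤ) : ZMod 4)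
            + ∑ x ∈ Finset.Ioo 0 (2*e+6),
            ((((x : ℤ) * ((2*e+6 - x : ℕ) : ℤ) ^ 2 * (Nat.choose (2 * (2*e+6) - 2) (2 * x - 1) : ℤ)
              - ((2*e+6 - x : ℕ) : ℤ) ^ 3 * (Nat.choose (2 * (2*e+6) - 2) (2 * x - 2) : ℤ))
              * Nt x * N (2*e+6 - x) : ℤ) : ZMod 4) := by
          rw [hNt (2*e+6) (by omega)]
          push_cast
          rfl
        have hterm' : ∀ x ∈ Finset.Ioo 0 (2*e+6),
            ((((x : ℤ) * ((2*e+6 - x : ℕ) : ℤ) ^ 2 * (Nat.choose (2 * (2*e+6) - 2) (2 * x - 1) : ℤ)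
              - ((2*e+6 - x : ℕ) : ℤ) ^ 3 * (Nat.choose (2 * (2*e+6) - 2) (2 * x - 2) : ℤ))
              * Nt x * N (2*e+6 - x) : ℤ) : ZMod 4)
            = (if Odd x then ((x * ((4*e+10).choose (2*x-1)) : ℕ) : ZMod 4)
                - (((2*e+6-x) * ((4*e+10).choose (2*x-2)) : ℕ) : ZMod 4) else 0) := by
          intro x hx
          simp only [Finset.mem_Ioo] at hx
          rw [show 2*(2*e+6)-2 = 4*e+10 by omega]
          by_cases hox : x % 2 = 1
          · rw [if_pos (Nat.odd_iff.mpr hox)]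
            obtain ⟨c, rfl⟩ : ∃ c, x = 2*c+1 := ⟨(x-1)/2, by omega⟩
            obtain ⟨u, hu1, hu2⟩ : ∃ u, 2*e+6-(2*c+1) = 2*u+1 ∧ c+u = e+2 :=
              ⟨e+2-c, by omega, by omega⟩
            rw [hu1]
            push_cast
            rw [ihNt1 (2*c+1) (by omega) (by omega) (by omega),
              ihN1 (2*u+1) (by omega) (by omega) (by omega)]
            generalize (((4*e+10).choose (2*(2*c+1)-2) : ℕ) : ZMod 4) = A
            generalize (((4*e+10).choose (2*(2*c+1)-1) : ℕ) : ZMod 4) = B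
            generalize (c : ZMod 4) = C
            generalize (u : ZMod 4) = U
            revert A B C U
            decide
          · rw [if_neg (by rw [Nat.odd_iff]; omega)]
            push_cast
            rw [ihN0 (2*e+6-x) (by omega) (by omega) (by omega), mul_zero]
        have hA : (∑ x ∈ Finset.Ioo 0 (2*e+6),
            if Odd x then x * ((4*e+10).choose (2*x-1)) else 0) = binT (4*e+10) 1 := by
          have hnat := reindex1 (2*e+6) (4*e+10) (fun k => (k/2+1) * (4*e+10).choose k)
            (by omega) (by omega) (fun k hk1 hk2 => by omega)
          refine Eq.trans ?_ hnat
          refine Finset.sum_congr rfl fun x hx => ?_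
          simp only [Finset.mem_Ioo] at hx
          by_cases h : Odd x
          · rw [if_pos h, if_pos h, show (2*x-1)/2+1 = x by omega]
          · rw [if_neg h, if_neg h]
        have hX : (∑ x ∈ Finset.Ioo 0 (2*e+6),
            if Odd x then x * ((4*e+10).choose (2*x-2)) else 0) = binT (4*e+10) 0 := by
          have hnat := reindex0 (2*e+6) (4*e+10) (fun k => (k/2+1) * (4*e+10).choose k)
            (by omega) (by omega) (fun k hk1 hk2 => by omega)
          refine Eq.trans ?_ hnat
          refine Finset.sum_congr rfl fun x hx => ?_
          simp only [Finset.mem_Ioo] at hx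
          by_cases h : Odd x
          · rw [if_pos h, if_pos h, show (2*x-2)/2+1 = x by omega]
          · rw [if_neg h, if_neg h]
        have hdS : (∑ x ∈ Finset.Ioo 0 (2*e+6),
            if Odd x then (2*e+6) * ((4*e+10).choose (2*x-2)) else 0)
            = (2*e+6) * binS (4*e+10) 0 := by
          have hnat := reindex0 (2*e+6) (4*e+10) (fun k => (2*e+6) * (4*e+10).choose k)
            (by omega) (by omega) (fun k hk1 hk2 => by omega)
          rw [hnat, show binS (4*e+10) 0 = ∑ k ∈ Finset.range (4*e+10+1),
            (if k % 4 = 0 then (4*e+10).choose k else 0) from rfl, Finset.mul_sum]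
          exact Finset.sum_congr rfl fun k _ => by by_cases h : k % 4 = 0 <;> simp [h]
        have hB : (∑ x ∈ Finset.Ioo 0 (2*e+6),
            if Odd x then (2*e+6-x) * ((4*e+10).choose (2*x-2)) else 0) + binT (4*e+10) 0
            = (2*e+6) * binS (4*e+10) 0 := by
          rw [← hX, ← hdS, ← Finset.sum_add_distrib]
          refine Finset.sum_congr rfl fun x hx => ?_
          simp only [Finset.mem_Ioo] at hx
          by_cases h : Odd x
          · rw [if_pos h, if_pos h, if_pos h, ← add_mul, show 2*e+6-x + x = 2*e+6 by omega]
          · rw [if_neg h, if_neg h, if_neg h, add_zero]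
        have z1 : ((binT (4*e+10) 1 : ℕ) : ZMod 4) = 0 :=
          (ZMod.natCast_eq_zero_iff _ 4).mpr
            (by have := binT_mod4 (4*e+10) 1 (by omega) (by omega); omega)
        have z0 : ((binT (4*e+10) 0 : ℕ) : ZMod 4) = 0 :=
          (ZMod.natCast_eq_zero_iff _ 4).mpr
            (by have := binT_mod4 (4*e+10) 0 (by omega) (by omega); omega)
        have zS : ((binS (4*e+10) 0 : ℕ) : ZMod 4) = 0 :=
          (ZMod.natCast_eq_zero_iff _ 4).mpr
            (by have := binS_mod8 (4*e+10) 0 (by omega) (by omega); omega)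
        have hNtres : ((Nt (2*e+6) : ℤ) : ZMod 4) = 0 := by
          rw [hcNt, hNres, mul_zero, zero_add, Finset.sum_congr rfl hterm']
          have cA : (∑ x ∈ Finset.Ioo 0 (2*e+6),
              if Odd x then ((x * ((4*e+10).choose (2*x-1)) : ℕ) : ZMod 4) else 0) = 0 := by
            have hz : ((∑ x ∈ Finset.Ioo 0 (2*e+6),
                if Odd x then x * ((4*e+10).choose (2*x-1)) else 0 : ℕ) : ZMod 4) = 0 := by
              rw [hA]; exact z1
            rw [Nat.cast_sum] at hz
            refine Eq.trans (Finset.sum_congr rfl fun x _ => ?_) hz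
            by_cases h : Odd x <;> simp [h]
          have cB : (∑ x ∈ Finset.Ioo 0 (2*e+6),
              if Odd x then (((2*e+6-x) * ((4*e+10).choose (2*x-2)) : ℕ) : ZMod 4) else 0) = 0 := by
            have hz : ((∑ x ∈ Finset.Ioo 0 (2*e+6),
                if Odd x then (2*e+6-x) * ((4*e+10).choose (2*x-2)) else 0 : ℕ) : ZMod 4) = 0 := by
              have h9 : ((∑ x ∈ Finset.Ioo 0 (2*e+6),
                  if Odd x then (2*e+6-x) * ((4*e+10).choose (2*x-2)) else 0 : ℕ) : ZMod 4)
                  + ((binT (4*e+10) 0 : ℕ) : ZMod 4)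
                  = (((2*e+6) * binS (4*e+10) 0 : ℕ) : ZMod 4) := by
                rw [← Nat.cast_add, hB]
              rw [z0, add_zero] at h9
              rw [h9, Nat.cast_mul, zS, mul_zero]
            rw [Nat.cast_sum] at hz
            refine Eq.trans (Finset.sum_congr rfl fun x _ => ?_) hz
            by_cases h : Odd x <;> simp [h]
          have hsplit : (∑ x ∈ Finset.Ioo 0 (2*e+6),
              if Odd x then ((x * ((4*e+10).choose (2*x-1)) : ℕ) : ZMod 4)
                - (((2*e+6-x) * ((4*e+10).choose (2*x-2)) : ℕ) : ZMod 4) else 0)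
              = (∑ x ∈ Finset.Ioo 0 (2*e+6),
                  if Odd x then ((x * ((4*e+10).choose (2*x-1)) : ℕ) : ZMod 4) else 0)
                - (∑ x ∈ Finset.Ioo 0 (2*e+6),
                  if Odd x then (((2*e+6-x) * ((4*e+10).choose (2*x-2)) : ℕ) : ZMod 4) else 0) := by
            rw [← Finset.sum_sub_distrib]
            refine Finset.sum_congr rfl fun x _ => ?_
            by_cases h : Odd x <;> simp [h]
          rw [hsplit, cA, cB]
          ring
        exact ⟨by rw [if_neg (by omega)]; exact hNres,
          by rw [if_neg (by omega), if_neg (by omega), if_neg (by omega)]; exact hNtres⟩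
  intro d hd
  obtain ⟨hk1, hk2⟩ := key d hd
  have conv1 : ∀ (a : ℤ) (c : ℤ), ((a : ZMod 4) = (c : ZMod 4)) → 0 ≤ c → c < 4 → a % 4 = c := by
    intro a c h hc1 hc2
    have : ((a - c : ℤ) : ZMod 4) = 0 := by push_cast; rw [h]; ring
    have hdvd := (ZMod.intCast_zmod_eq_zero_iff_dvd _ 4).mp this
    omega
  refine ⟨?_, ?_, ?_, ?_, ?_⟩
  · intro hodd
    rw [if_pos (Nat.odd_iff.mp hodd)] at hk1
    exact conv1 _ 1 (by rw [hk1]; decide) (by norm_num) (by norm_num)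
  · intro heven
    rw [if_neg (by have := Nat.even_iff.mp heven; omega)] at hk1
    exact conv1 _ 0 (by rw [hk1]; decide) (by norm_num) (by norm_num)
  · rintro (hodd | rfl)
    · rw [if_pos (Nat.odd_iff.mp hodd)] at hk2
      exact conv1 _ 1 (by rw [hk2]; decide) (by norm_num) (by norm_num)
    · rw [if_neg (by norm_num), if_pos rfl] at hk2
      exact conv1 _ 1 (by rw [hk2]; decide) (by norm_num) (by norm_num)
  · rintro rfl
    rw [if_neg (by norm_num), if_neg (by norm_num), if_pos rfl] at hk2
    exact conv1 _ 2 (by rw [hk2]; decide) (by norm_num) (by norm_num)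
  · rintro ⟨heven, h2, h4⟩
    rw [if_neg (by have := Nat.even_iff.mp heven; omega), if_neg h2, if_neg h4] at hk2
    exact conv1 _ 0 (by rw [hk2]; decide) (by norm_num) (by norm_num)
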